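/- Let d ≥ 2. For any ε > 0 and M > 1 there exists a subset Y ⊆ ℤ^d such that: (1) every point of ℝ^d is visible for Y; (2) the complement Ỹ = ℤ^d \ Y satisfies #(Ỹ ∩ B(0,r)) < εr for all r > 0; (3) Y is relatively dense in ℝ^d; (4) any two distinct points of Ỹ are at distance at least M. -/

import Mathlib

open Metric Set MeasureTheory Filter Real

noncomputable def setDist {E : Type*} [PseudoMetricSpace E] (A B : Set E) : ℝ :=
  sInf (Set.image2 dist A B)

def ray {E : Type*} [NormedAddCommGroup E] [NormedSpace ℝ E] (x v : E) : Set E :=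
  {p : E | ∃ t : ℝ, 0 ≤ t ∧ p = x + t • v}

namespace S9

lemma sep_int {Mn : ℕ} {a a' j j' z0 z1 z0' z1' : ℤ} (ha' : 0 ≤ a')
    (hA : a' * (1 + Mn + |z1| + |z1'|) + (|z0| + |z0'| + Mn) ≤ a)
    (hj : 1 ≤ j) (hj' : 1 ≤ j') :
    (Mn : ℤ) ≤ |(z0 + j * a) - (z0' + j' * a')| ∨ (Mn : ℤ) ≤ |(z1 + j) - (z1' + j')| := by
  by_cases h1 : (Mn : ℤ) ≤ |(z1 + j) - (z1' + j')|
  · right; exact h1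
  left
  push_neg at h1
  have hd1 : (z1 + j) - (z1' + j') ≥ -Mn := by
    have := neg_abs_le ((z1 + j) - (z1' + j')); omega
  have hjj : j' ≤ j + (|z1| + |z1'| + Mn) := by
    have := le_abs_self z1; have := neg_abs_le z1'; omega
  have haa' : a' ≤ a := by
    nlinarith [abs_nonneg z1, abs_nonneg z1', abs_nonneg z0, abs_nonneg z0',
      Int.natCast_nonneg Mn, mul_nonneg ha' (abs_nonneg z1)]
  have p1 : j' * a' ≤ (j + (|z1| + |z1'| + Mn)) * a' := mul_le_mul_of_nonneg_right hjj ha'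
  have p2 : 0 ≤ (j - 1) * (a - a') := mul_nonneg (by omega) (by omega)
  have key : (Mn : ℤ) ≤ (z0 + j * a) - (z0' + j' * a') := by
    have hb0 := neg_abs_le z0
    have hb0' := le_abs_self z0'
    nlinarith [p1, p2, hA]
  calc (Mn:ℤ) ≤ _ := key
    _ ≤ _ := le_abs_self _

variable (m : ℕ)

noncomputable def toE (u : Fin (m+2) → ℤ) : EuclideanSpace ℝ (Fin (m+2)) := WithLp.toLp 2 (fun i => (u i : ℝ))

variable (e : ℕ ≃ (Fin (m+2) → ℤ)) (K : ℕ)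

def G (n : ℕ) : ℕ := K * 2^n + ∑ k ∈ Finset.range (n+1), ((e k 0).natAbs + (e k 1).natAbs + K)

noncomputable def A (u : Fin (m+2) → ℤ) : ℕ := (G m e K (e.symm u))^(e.symm u + 2)

def wv (a : ℕ) : Fin (m+2) → ℤ := fun i => if i = 0 then (a : ℤ) else if i = 1 then 1 else 0

noncomputable def Ytil : Set (EuclideanSpace ℝ (Fin (m+2))) :=
  {p | ∃ u : Fin (m+2) → ℤ, ∃ j : ℤ, 1 ≤ j ∧ p = toE m (u + j • wv m (A m e K u))}

variable {m e K}

lemma K_le_G (n : ℕ) : K ≤ G m e K n := by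
  have h : K * 1 ≤ K * 2^n := Nat.mul_le_mul_left K (Nat.one_le_two_pow)
  unfold G; omega

lemma G_mono {n n' : ℕ} (h : n ≤ n') : G m e K n ≤ G m e K n' := by
  unfold G
  have h1 : K * 2^n ≤ K * 2^n' := Nat.mul_le_mul_left K (Nat.pow_le_pow_right (by norm_num) h)
  have h2 : ∑ k ∈ Finset.range (n+1), ((e k 0).natAbs + (e k 1).natAbs + K) ≤
      ∑ k ∈ Finset.range (n'+1), ((e k 0).natAbs + (e k 1).natAbs + K) :=
    Finset.sum_le_sum_of_subset (by simp [Finset.range_subset]; omega)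
  omega

lemma term_le_sum {k n : ℕ} (hk : k ≤ n) :
    (e k 0).natAbs + (e k 1).natAbs + K ≤
      ∑ k ∈ Finset.range (n+1), ((e k 0).natAbs + (e k 1).natAbs + K) := by
  have h := Finset.single_le_sum (f := fun k => (e k 0).natAbs + (e k 1).natAbs + K)
    (fun i _ => Nat.zero_le _) (Finset.mem_range.2 (by omega) : k ∈ Finset.range (n+1))
  simpa using h

lemma pow_scale_le_G (n : ℕ) : K * 2^n ≤ G m e K n := by unfold G; omega

lemma G_le_A (u : Fin (m+2) → ℤ) : G m e K (e.symm u) ≤ A m e K u :=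
  Nat.le_self_pow (by omega) _

lemma A_lb (u : Fin (m+2) → ℤ) : K * 2^(e.symm u) + (u 0).natAbs ≤ A m e K u := by
  refine le_trans ?_ (G_le_A u)
  have h := term_le_sum (e := e) (m := m) (K := K) (le_refl (e.symm u))
  rw [e.apply_symm_apply] at h
  unfold G
  omega

lemma K_le_A (u : Fin (m+2) → ℤ) : K ≤ A m e K u :=
  le_trans (K_le_G _) (G_le_A u)

lemma A_sep {Mn : ℕ} (hK : Mn + 2 ≤ K) {u u' : Fin (m+2) → ℤ} (h : e.symm u' < e.symm u) :
    A m e K u' * (1 + Mn + (u 1).natAbs + (u' 1).natAbs)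
      + ((u 0).natAbs + (u' 0).natAbs + Mn) ≤ A m e K u := by
  set n := e.symm u with hn
  set n' := e.symm u' with hn'
  have heu : e n = u := by rw [hn, e.apply_symm_apply]
  have heu' : e n' = u' := by rw [hn', e.apply_symm_apply]
  set c := 1 + Mn + (u 1).natAbs + (u' 1).natAbs with hc
  set dd := (u 0).natAbs + (u' 0).natAbs + Mn with hdd
  have h2 : ((e n 0).natAbs + (e n 1).natAbs + K) + ((e n' 0).natAbs + (e n' 1).natAbs + K) ≤
      ∑ k ∈ Finset.range (n+1), ((e k 0).natAbs + (e k 1).natAbs + K) := by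
    have hsub : ({n', n} : Finset ℕ) ⊆ Finset.range (n+1) := by
      intro x hx; simp at hx; rcases hx with h1 | h1 <;> simp [h1] <;> omega
    have h3 := Finset.sum_le_sum_of_subset (f := fun k => (e k 0).natAbs + (e k 1).natAbs + K) hsub
    rw [Finset.sum_pair (by omega : n' ≠ n)] at h3
    omega
  rw [heu, heu'] at h2
  have hGbig : ((u 0).natAbs + (u 1).natAbs + K) + ((u' 0).natAbs + (u' 1).natAbs + K)
      ≤ G m e K n := by
    unfold G; omega
  have hcG : c + 1 ≤ G m e K n := by omega
  have hdG : dd ≤ G m e K n := by omega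
  have hA' : A m e K u' ≤ (G m e K n)^(n+1) := by
    unfold A
    rw [← hn']
    calc (G m e K n')^(n'+2) ≤ (G m e K n)^(n'+2) :=
          Nat.pow_le_pow_left (G_mono (le_of_lt h)) _
      _ ≤ (G m e K n)^(n+1) := Nat.pow_le_pow_right (le_trans (by omega) (K_le_G n)) (by omega)
  have hexp : A m e K u = (G m e K n)^(n+1) * G m e K n := by
    unfold A; rw [← hn, pow_succ]
  have e1 : (G m e K n)^(n+1) * G m e K n ≥ (G m e K n)^(n+1) * (c + 1) :=
    Nat.mul_le_mul_left _ hcG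
  have e2 : (G m e K n)^(n+1) * (c+1) = (G m e K n)^(n+1) * c + (G m e K n)^(n+1) := by ring
  have e3 : (G m e K n)^(n+1) * c ≥ A m e K u' * c := Nat.mul_le_mul_right _ hA'
  have e4 : (G m e K n)^(n+1) ≥ dd := le_trans hdG (Nat.le_self_pow (by omega) _)
  omega

lemma toE_apply (u : Fin (m+2) → ℤ) (i : Fin (m+2)) : toE m u i = (u i : ℝ) := rfl

lemma toE_inj {u u' : Fin (m+2) → ℤ} (h : toE m u = toE m u') : u = u' := by
  funext i
  have h2 : toE m u i = toE m u' i := by rw [h]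
  rw [toE_apply, toE_apply] at h2
  exact Int.cast_injective h2

lemma coord_le_dist (x y : EuclideanSpace ℝ (Fin (m+2))) (i : Fin (m+2)) :
    |x i - y i| ≤ dist x y := by
  rw [EuclideanSpace.dist_eq]
  rw [show |x i - y i| = Real.sqrt ((x i - y i)^2) from (Real.sqrt_sq_eq_abs _).symm]
  apply Real.sqrt_le_sqrt
  have := Finset.single_le_sum (f := fun j => dist (x j) (y j)^2) (fun j _ => by positivity)
    (Finset.mem_univ i)
  simpa [Real.dist_eq] using this

lemma fin01 : (0 : Fin (m+2)) ≠ 1 := by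
  intro h; have := congrArg Fin.val h; simp [Fin.val_one] at this

lemma wv_zero (a : ℕ) : wv m a 0 = (a : ℤ) := by simp [wv]
lemma wv_one (a : ℕ) : wv m a 1 = 1 := by simp [wv, fin01]

lemma tail_coord0 (u : Fin (m+2) → ℤ) (j : ℤ) (a : ℕ) : (u + j • wv m a) 0 = u 0 + j * a := by
  simp [wv_zero, smul_eq_mul]
lemma tail_coord1 (u : Fin (m+2) → ℤ) (j : ℤ) (a : ℕ) : (u + j • wv m a) 1 = u 1 + j := by
  simp [wv_one, smul_eq_mul]

/-- asymmetric separation bound -/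
lemma sep_real {Mn : ℕ} (hK : Mn + 2 ≤ K) {u u' : Fin (m+2) → ℤ} {j j' : ℤ}
    (hj : 1 ≤ j) (hj' : 1 ≤ j') (h : e.symm u' < e.symm u) :
    (Mn : ℝ) ≤ dist (toE m (u + j • wv m (A m e K u))) (toE m (u' + j' • wv m (A m e K u'))) := by
  have hAs := A_sep hK h
  have hAz : (A m e K u' : ℤ) * (1 + Mn + |u 1| + |u' 1|) + (|u 0| + |u' 0| + Mn)
      ≤ (A m e K u : ℤ) := by
    have := hAs
    push_cast [← Int.natCast_natAbs] at this ⊢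
    exact_mod_cast this
  rcases sep_int (by positivity) hAz hj hj' with hc | hc
  · refine le_trans ?_ (coord_le_dist _ _ 0)
    rw [toE_apply, toE_apply, tail_coord0, tail_coord0]
    have := (Int.cast_le (R := ℝ)).2 hc; rw [Int.cast_natCast, Int.cast_abs, Int.cast_sub] at this; exact this
  · refine le_trans ?_ (coord_le_dist _ _ 1)
    rw [toE_apply, toE_apply, tail_coord1, tail_coord1]
    have := (Int.cast_le (R := ℝ)).2 hc; rw [Int.cast_natCast, Int.cast_abs, Int.cast_sub] at this; exact this

/-- points of the removed set are mutually M-separated -/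
lemma Ytil_sep {Mn : ℕ} (hK : Mn + 2 ≤ K) {p q : EuclideanSpace ℝ (Fin (m+2))}
    (hp : p ∈ Ytil m e K) (hq : q ∈ Ytil m e K) (hne : p ≠ q) : (Mn : ℝ) ≤ dist p q := by
  obtain ⟨u, j, hj, rfl⟩ := hp
  obtain ⟨u', j', hj', rfl⟩ := hq
  rcases lt_trichotomy (e.symm u') (e.symm u) with h | h | h
  · exact sep_real hK hj hj' h
  · have hu : u' = u := by
      have h2 := congrArg e h; rwa [e.apply_symm_apply, e.apply_symm_apply] at h2
    subst hu
    have hjj : j ≠ j' := by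
      intro hjj; exact hne (by rw [hjj])
    refine le_trans ?_ (coord_le_dist _ _ 0)
    rw [toE_apply, toE_apply, tail_coord0, tail_coord0]
    have hZ : (Mn : ℤ) ≤ |(u' 0 + j * (A m e K u' : ℤ)) - (u' 0 + j' * (A m e K u'))| := by
      have h1 : (1:ℤ) ≤ |j - j'| := Int.one_le_abs (sub_ne_zero.2 hjj)
      have h2 : (u' 0 + j * (A m e K u' : ℤ)) - (u' 0 + j' * (A m e K u'))
          = (j - j') * (A m e K u') := by ring
      rw [h2, abs_mul, abs_of_nonneg (by positivity : (0:ℤ) ≤ (A m e K u' : ℤ))]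
      have h3 : (Mn:ℤ) ≤ (A m e K u' : ℤ) := by
        have := le_trans (by omega : Mn ≤ K) (K_le_A (e := e) u')
        exact_mod_cast this
      nlinarith [h3, h1, (by positivity : (0:ℤ) ≤ (A m e K u' : ℤ))]
    have := (Int.cast_le (R := ℝ)).2 hZ; rw [Int.cast_natCast, Int.cast_abs, Int.cast_sub] at this; exact this
  · rw [dist_comm]; exact sep_real hK hj' hj h


lemma wv_other (a : ℕ) {i : Fin (m+2)} (h0 : i ≠ 0) (h1 : i ≠ 1) : wv m a i = 0 := by
  simp [wv, h0, h1]

/-- the visibility estimate along the escape ray of a lattice point -/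
lemma vis_lattice (u z' : Fin (m+2) → ℤ) {y p : EuclideanSpace ℝ (Fin (m+2))}
    (hyz : y = toE m z')
    (hyY : y ∉ Ytil m e K) (hyx : y ≠ toE m u)
    (hp : p ∈ ray (toE m u)
      (‖toE m (wv m (A m e K u))‖⁻¹ • toE m (wv m (A m e K u)))) :
    1 / (A m e K u + 1) ≤ dist p y := by
  subst hyz
  set a := A m e K u with ha
  set w := toE m (wv m a) with hw
  obtain ⟨t, ht, rfl⟩ := hp
  rw [smul_smul] at *
  set s := t * ‖w‖⁻¹ with hs
  have hs0 : 0 ≤ s := mul_nonneg ht (inv_nonneg.2 (norm_nonneg _))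
  have hap : (0:ℝ) < a + 1 := by positivity
  have hδ1 : 1 / ((a:ℝ) + 1) ≤ 1 := by
    rw [div_le_one hap]; norm_num
  have hcoord : ∀ i, (toE m u + s • w) i = (u i : ℝ) + s * ((wv m a i : ℤ) : ℝ) := by
    intro i; rfl
  -- case analysis
  by_cases hout : ∀ i, i ≠ 0 → i ≠ 1 → z' i = u i
  · -- differences only in coordinates 0, 1
    by_cases hmul : z' 0 - u 0 = (a:ℤ) * (z' 1 - u 1)
    · rcases lt_trichotomy (z' 1 - u 1) 0 with hz1 | hz1 | hz1
      · -- z1 ≤ -1 : backward point, coordinate 1 distance ≥ 1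
        refine le_trans hδ1 ?_
        refine le_trans ?_ (coord_le_dist _ _ 1)
        rw [hcoord 1, toE_apply, wv_one]
        have : |(u 1:ℝ) + s * ((1:ℤ):ℝ) - (z' 1 : ℝ)| = |s + ((u 1 - z' 1 : ℤ):ℝ)| := by
          push_cast; ring_nf
        rw [this]
        have hge : (1:ℝ) ≤ ((u 1 - z' 1 : ℤ):ℝ) := by exact_mod_cast (by omega : (1:ℤ) ≤ u 1 - z' 1)
        rw [abs_of_nonneg (by linarith)]
        linarith
      · -- z = 0 : y = x, contradiction
        exfalso
        apply hyx
        have hzu : z' = u := by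
          have hm2 := hmul
          rw [hz1, mul_zero] at hm2
          funext i
          by_cases h0 : i = 0
          · subst h0; omega
          · by_cases h1 : i = 1
            · subst h1; omega
            · exact hout i h0 h1
        rw [hzu]
      · -- z1 ≥ 1 : y would be in the removed set
        exfalso
        apply hyY
        refine ⟨u, z' 1 - u 1, by omega, ?_⟩
        have hzu : z' = u + (z' 1 - u 1) • wv m a := by
          funext i
          by_cases h0 : i = 0
          · subst h0
            rw [Pi.add_apply, Pi.smul_apply, wv_zero, smul_eq_mul]
            linear_combination hmul
          · by_cases h1 : i = 1
            · subst h1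
              rw [Pi.add_apply, Pi.smul_apply, wv_one, smul_eq_mul]
              ring
            · rw [Pi.add_apply, Pi.smul_apply, wv_other a h0 h1, smul_eq_mul,
                hout i h0 h1]
              ring
        rw [← ha, ← hzu]
    · -- transversal point
      have h1 : (1:ℤ) ≤ |(z' 0 - u 0) - (a:ℤ) * (z' 1 - u 1)| := Int.one_le_abs (by omega)
      have h1R : (1:ℝ) ≤ |((z' 0:ℝ) - u 0) - (a:ℝ) * ((z' 1:ℝ) - u 1)| := by
        exact_mod_cast h1
      have hd0 : |((z' 0:ℝ) - u 0) - s * a| ≤ dist (toE m u + s • w) (toE m z') := by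
        refine le_trans (le_of_eq ?_) (coord_le_dist _ _ 0)
        rw [hcoord 0, toE_apply, wv_zero, abs_sub_comm]
        push_cast
        ring_nf
      have hd1 : |((z' 1:ℝ) - u 1) - s| ≤ dist (toE m u + s • w) (toE m z') := by
        refine le_trans (le_of_eq ?_) (coord_le_dist _ _ 1)
        rw [hcoord 1, toE_apply, wv_one, abs_sub_comm]
        push_cast
        ring_nf
      have htri : |((z' 0:ℝ) - u 0) - (a:ℝ) * ((z' 1:ℝ) - u 1)|
          ≤ |((z' 0:ℝ) - u 0) - s * a| + (a:ℝ) * |((z' 1:ℝ) - u 1) - s| := by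
        have : ((z' 0:ℝ) - u 0) - (a:ℝ) * ((z' 1:ℝ) - u 1)
            = (((z' 0:ℝ) - u 0) - s * a) - (a:ℝ) * (((z' 1:ℝ) - u 1) - s) := by ring
        rw [this]
        refine le_trans (abs_sub _ _) ?_
        rw [abs_mul, abs_of_nonneg (by positivity : (0:ℝ) ≤ (a:ℝ))]
      have han : (0:ℝ) ≤ (a:ℝ) := by positivity
      have hmul2 : (a:ℝ) * |((z' 1:ℝ) - u 1) - s| ≤ (a:ℝ) * dist (toE m u + s • w) (toE m z') :=
        mul_le_mul_of_nonneg_left hd1 han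
      rw [div_le_iff₀ hap]
      nlinarith [h1R, htri, hd0, hmul2]
  · -- a coordinate beyond {0,1} differs : distance ≥ 1
    push_neg at hout
    obtain ⟨i, h0, h1, hzi⟩ := hout
    refine le_trans hδ1 ?_
    refine le_trans ?_ (coord_le_dist _ _ i)
    rw [hcoord i, toE_apply, wv_other a h0 h1]
    have : |(u i:ℝ) + s * ((0:ℤ):ℝ) - (z' i : ℝ)| = |((u i - z' i : ℤ):ℝ)| := by
      push_cast; ring_nf
    rw [this, ← Int.cast_abs]
    exact_mod_cast Int.one_le_abs (by omega)


/-- counting the removed points in a ball -/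
lemma Ytil_count {ε : ℝ} (hε : 0 < ε) (hK8 : (8:ℝ) ≤ ε * K) (hK1 : 1 ≤ K)
    {r : ℝ} (hr : 0 < r) :
    ((Ytil m e K ∩ Metric.ball (0 : EuclideanSpace ℝ (Fin (m+2))) r).ncard : ℝ) < ε * r := by
  classical
  have hKpos : (0:ℝ) < K := by exact_mod_cast hK1
  set S := (Finset.range ⌈r⌉₊).filter (fun n => (K:ℝ) * 2^n < r) with hS
  set F := S.biUnion (fun n => (Finset.Icc (1:ℤ) (⌊r / (A m e K (e n) : ℝ)⌋ + 1)).image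
      (fun j => toE m (e n + j • wv m (A m e K (e n))))) with hF
  have hApos : ∀ u, (0:ℝ) < (A m e K u : ℝ) := by
    intro u
    have := le_trans hK1 (K_le_A (e := e) (K := K) u)
    exact_mod_cast lt_of_lt_of_le one_pos (by exact_mod_cast this)
  have hAbig : ∀ u, (K:ℝ) * 2^(e.symm u) + |(u 0 : ℝ)| ≤ (A m e K u : ℝ) := by
    intro u
    have h := A_lb (e := e) (K := K) u
    have h2 : ((K:ℝ) * 2^(e.symm u) + ((u 0).natAbs : ℝ)) ≤ (A m e K u : ℝ) := by
      exact_mod_cast h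
    rw [Nat.cast_natAbs] at h2
    push_cast at h2
    exact h2
  have hsub : Ytil m e K ∩ Metric.ball 0 r ⊆ ↑F := by
    rintro y ⟨⟨u, j, hj, rfl⟩, hball⟩
    set n := e.symm u with hn
    have heu : e n = u := by rw [hn, e.apply_symm_apply]
    have hcoord : |((u 0 : ℝ) + (j : ℝ) * (A m e K u : ℝ))| < r := by
      have hb := mem_ball_iff_norm.1 hball
      rw [sub_zero] at hb
      have h0 := coord_le_dist (toE m (u + j • wv m (A m e K u))) 0 0
      rw [dist_zero_right] at h0
      have : (toE m (u + j • wv m (A m e K u))) 0 = (u 0 : ℝ) + (j:ℝ) * (A m e K u : ℝ) := by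
        rw [toE_apply, tail_coord0]; push_cast; ring
      have hz : (0 : EuclideanSpace ℝ (Fin (m+2))) 0 = 0 := rfl
      rw [this, hz, sub_zero] at h0
      exact lt_of_le_of_lt h0 hb
    have hjR : (1:ℝ) ≤ (j:ℝ) := by exact_mod_cast hj
    have hjA : (j:ℝ) * (A m e K u : ℝ) < r + |(u 0 : ℝ)| := by
      have : (j:ℝ) * (A m e K u : ℝ) = ((u 0 : ℝ) + (j : ℝ) * (A m e K u : ℝ)) - (u 0:ℝ) := by ring
      rw [this]
      calc ((u 0 : ℝ) + (j : ℝ) * (A m e K u : ℝ)) - (u 0:ℝ)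
          ≤ |((u 0 : ℝ) + (j : ℝ) * (A m e K u : ℝ))| + |(u 0:ℝ)| := by
            have := le_abs_self ((u 0 : ℝ) + (j : ℝ) * (A m e K u : ℝ))
            have := neg_abs_le (u 0 : ℝ)
            linarith
        _ < r + |(u 0:ℝ)| := by linarith
    have hAj : (A m e K u : ℝ) ≤ (j:ℝ) * (A m e K u : ℝ) := by
      nlinarith [hApos u]
    have hKn : (K:ℝ) * 2^n < r := by
      have := hAbig u
      nlinarith [abs_nonneg (u 0 : ℝ)]
    have hnr : n ∈ Finset.range ⌈r⌉₊ := by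
      refine Finset.mem_range.2 (Nat.lt_ceil.2 ?_)
      have h2n : (n:ℝ) < 2^n := by exact_mod_cast Nat.lt_two_pow_self (n := n)
      have hK1R : (1:ℝ) ≤ (K:ℝ) := by exact_mod_cast hK1
      have h3 : (1:ℝ) * 2^n ≤ (K:ℝ) * 2^n :=
        mul_le_mul_of_nonneg_right hK1R (by positivity)
      linarith
    have hnS : n ∈ S := Finset.mem_filter.2 ⟨hnr, hKn⟩
    refine Finset.mem_coe.2 (Finset.mem_biUnion.2 ⟨n, hnS, ?_⟩)
    refine Finset.mem_image.2 ⟨j, ?_, by rw [heu]⟩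
    refine Finset.mem_Icc.2 ⟨hj, ?_⟩
    have hjm1 : ((j - 1 : ℤ):ℝ) * (A m e K u : ℝ) < r := by
      have := hAbig u
      have habs := abs_nonneg (u 0 : ℝ)
      push_cast
      nlinarith [(by positivity : (0:ℝ) < (2:ℝ)^n), hKpos]
    have : ((j - 1 : ℤ):ℝ) ≤ r / (A m e K u : ℝ) := by
      rw [le_div_iff₀ (hApos u)]
      have h1A : (1:ℝ) ≤ (A m e K u : ℝ) := by
        exact_mod_cast le_trans hK1 (K_le_A (e := e) (K := K) u)
      have hj1 : (0:ℝ) ≤ ((j-1:ℤ):ℝ) := by exact_mod_cast (by omega : (0:ℤ) ≤ j - 1)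
      nlinarith [hjm1]
    have hfl : j - 1 ≤ ⌊r / (A m e K u : ℝ)⌋ := Int.le_floor.2 this
    rw [heu]
    omega
  have hfin : (↑F : Set (EuclideanSpace ℝ (Fin (m+2)))).Finite := F.finite_toSet
  have h1 : ((Ytil m e K ∩ Metric.ball (0 : EuclideanSpace ℝ (Fin (m+2))) r).ncard : ℝ)
      ≤ (F.card : ℝ) := by
    have := Set.ncard_le_ncard hsub hfin
    rw [Set.ncard_coe_finset] at this
    exact_mod_cast this
  have h2 : (F.card : ℝ) ≤ ∑ n ∈ S, (((⌊r / (A m e K (e n) : ℝ)⌋ + 1).toNat : ℕ) : ℝ) := by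
    have hcb := Finset.card_biUnion_le (s := S)
      (t := fun n => (Finset.Icc (1:ℤ) (⌊r / (A m e K (e n) : ℝ)⌋ + 1)).image
      (fun j => toE m (e n + j • wv m (A m e K (e n)))))
    have hstep : ∀ n ∈ S, ((Finset.Icc (1:ℤ) (⌊r / (A m e K (e n) : ℝ)⌋ + 1)).image
        (fun j => toE m (e n + j • wv m (A m e K (e n))))).card
        ≤ (⌊r / (A m e K (e n) : ℝ)⌋ + 1).toNat := by
      intro n _
      refine le_trans Finset.card_image_le ?_
      rw [Int.card_Icc]
      omega
    have := le_trans hcb (Finset.sum_le_sum hstep)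
    exact_mod_cast le_trans (by exact_mod_cast this) (le_refl _)
  have h3 : ∀ n ∈ S, (((⌊r / (A m e K (e n) : ℝ)⌋ + 1).toNat : ℕ) : ℝ)
      ≤ (2 * r / K) * (1/2)^n := by
    intro n hnS
    have hcond := (Finset.mem_filter.1 hnS).2
    have hA2 : (K:ℝ) * 2^n ≤ (A m e K (e n) : ℝ) := by
      have := hAbig (e n)
      rw [e.symm_apply_apply] at this
      have habs := abs_nonneg ((e n) 0 : ℝ)
      linarith
    have hApos' := hApos (e n)
    have hup : r / (A m e K (e n) : ℝ) ≤ r / ((K:ℝ) * 2^n) :=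
      div_le_div_of_nonneg_left (le_of_lt hr) (by positivity) hA2
    have h1r : (1:ℝ) < r / ((K:ℝ) * 2^n) := by
      rw [lt_div_iff₀ (by positivity)]; linarith
    have htn : (((⌊r / (A m e K (e n) : ℝ)⌋ + 1).toNat : ℕ) : ℝ)
        ≤ r / (A m e K (e n) : ℝ) + 1 := by
      have hfl0 : (0:ℤ) ≤ ⌊r / (A m e K (e n) : ℝ)⌋ := Int.floor_nonneg.2 (by positivity)
      have hcst : (((⌊r / (A m e K (e n) : ℝ)⌋ + 1).toNat : ℕ) : ℝ)
          = ((⌊r / (A m e K (e n) : ℝ)⌋ + 1 : ℤ) : ℝ) := by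
        exact_mod_cast congrArg (Int.cast : ℤ → ℝ)
          (Int.toNat_of_nonneg (by omega : (0:ℤ) ≤ ⌊r / (A m e K (e n) : ℝ)⌋ + 1))
      rw [hcst]
      push_cast
      have := Int.floor_le (r / (A m e K (e n) : ℝ))
      linarith
    calc (((⌊r / (A m e K (e n) : ℝ)⌋ + 1).toNat : ℕ) : ℝ)
        ≤ r / (A m e K (e n) : ℝ) + 1 := htn
      _ ≤ r / ((K:ℝ) * 2^n) + r / ((K:ℝ) * 2^n) := by linarith
      _ = (2 * r / K) * (1/2)^n := by
          field_simp
          rw [mul_right_comm, ← mul_pow]; norm_num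
  have h4 : ∑ n ∈ S, (((⌊r / (A m e K (e n) : ℝ)⌋ + 1).toNat : ℕ) : ℝ)
      ≤ (2 * r / K) * ∑ n ∈ S, (1/2:ℝ)^n := by
    rw [Finset.mul_sum]
    exact Finset.sum_le_sum h3
  have h5 : ∑ n ∈ S, (1/2:ℝ)^n ≤ 2 := by
    refine le_trans (Finset.sum_le_sum_of_subset_of_nonneg (Finset.filter_subset _ _)
      (fun i _ _ => by positivity)) ?_
    exact sum_geometric_two_le _
  have h6 : (2 * r / K) * ∑ n ∈ S, (1/2:ℝ)^n ≤ 4 * r / K := by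
    have h2r : (0:ℝ) ≤ 2 * r / K := by positivity
    calc (2 * r / K) * ∑ n ∈ S, (1/2:ℝ)^n ≤ (2 * r / K) * 2 := by nlinarith [h5, h2r]
      _ = 4 * r / K := by ring
  have h7 : 4 * r / K ≤ ε * r / 2 := by
    rw [div_le_div_iff₀ hKpos (by norm_num : (0:ℝ) < 2)]
    nlinarith [hr]
  have h8 : ε * r / 2 < ε * r := by nlinarith [hε, hr]
  linarith


/-- step in direction 0 -/
def stv (m : ℕ) (k : ℤ) : Fin (m+2) → ℤ := fun i => if i = 0 then k else 0

lemma round_best (x : ℝ) (mm : ℤ) : |x - round x| ≤ |x - mm| := by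
  rcases eq_or_ne mm (round x) with h | h
  · rw [h]
  · have h1 : |x - round x| ≤ 1/2 := abs_sub_round x
    have h2 : (1:ℝ) ≤ |(mm : ℝ) - round x| := by
      have hc : (mm : ℝ) - round x = ((mm - round x : ℤ) : ℝ) := by push_cast; ring
      rw [hc, ← Int.cast_abs]
      exact_mod_cast Int.one_le_abs (sub_ne_zero.2 h)
    have h3 : |(mm:ℝ) - round x| = |(x - round x) - (x - mm)| := by ring_nf
    have h4 : |(x - round x) - (x - mm)| ≤ |x - round x| + |x - mm| := abs_sub _ _
    linarith

lemma dist_toE_st (v : Fin (m+2) → ℤ) (k : ℤ) :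
    dist (toE m v) (toE m (v + stv m k)) = |(k:ℝ)| := by
  have h : toE m (v + stv m k) = toE m v + EuclideanSpace.single 0 (k:ℝ) := by
    ext i
    rw [PiLp.add_apply, toE_apply, toE_apply, EuclideanSpace.single_apply, Pi.add_apply]
    unfold stv
    by_cases h0 : i = 0 <;> simp [h0] <;> push_cast <;> ring
  rw [h, dist_self_add_right, EuclideanSpace.norm_single, Real.norm_eq_abs]

/-- near each vector there is a point outside the removed set -/
lemma near_Y {Mn : ℕ} (hK : Mn + 2 ≤ K) (hMn : (1:ℝ) < (Mn:ℝ)) (v : Fin (m+2) → ℤ) :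
    ∃ w : Fin (m+2) → ℤ, toE m w ∉ Ytil m e K ∧ dist (toE m v) (toE m w) ≤ 1 := by
  by_cases hv : toE m v ∈ Ytil m e K
  · refine ⟨v + stv m 1, ?_, by rw [dist_toE_st]; norm_num⟩
    intro hv2
    have hne : toE m v ≠ toE m (v + stv m 1) := by
      intro h
      have := congrFun (toE_inj h) 0
      simp [stv] at this
    have := Ytil_sep hK hv hv2 hne
    rw [dist_toE_st] at this
    have h2 : (Mn:ℝ) ≤ 1 := by simpa using this
    linarith
  · exact ⟨v, hv, by simp⟩

lemma dist_round_toE (x : EuclideanSpace ℝ (Fin (m+2))) :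
    dist x (toE m (fun i => round (x i))) ≤ Real.sqrt (m+2) := by
  rw [EuclideanSpace.dist_eq]
  have hsum : ∑ i, dist (x i) ((toE m (fun i => round (x i))) i) ^ 2 ≤ (m+2 : ℝ) := by
    have hbd : ∀ i : Fin (m+2), dist (x i) ((toE m (fun i => round (x i))) i) ^ 2 ≤ 1 := by
      intro i
      rw [toE_apply, Real.dist_eq]
      have h1 : |x i - (round (x i) : ℝ)| ≤ 1/2 := abs_sub_round (x i)
      nlinarith [abs_nonneg (x i - (round (x i):ℝ))]
    calc ∑ i, dist (x i) ((toE m (fun i => round (x i))) i) ^ 2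
        ≤ ∑ _i : Fin (m+2), (1:ℝ) := Finset.sum_le_sum (fun i _ => hbd i)
      _ = (m+2 : ℝ) := by simp
  calc Real.sqrt (∑ i, dist (x i) ((toE m (fun i => round (x i))) i) ^ 2)
      ≤ Real.sqrt (m+2 : ℝ) := Real.sqrt_le_sqrt hsum
    _ = Real.sqrt (m+2) := by norm_num
end S9

open S9 in
theorem stmt9 (d : ℕ) (hd : 2 ≤ d) (ε M : ℝ) (hε : 0 < ε) (hM : 1 < M)
    (L : Set (EuclideanSpace ℝ (Fin d)))
    (hL : L = {x : EuclideanSpace ℝ (Fin d) | ∀ i : Fin d, ∃ z : ℤ, x i = (z : ℝ)}) :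
    ∃ Y : Set (EuclideanSpace ℝ (Fin d)), Y ⊆ L ∧
      (∀ x : EuclideanSpace ℝ (Fin d), ∃ v ∈ sphere (0 : EuclideanSpace ℝ (Fin d)) 1,
        0 < setDist (ray x v) (Y \ {x})) ∧
      (∀ r : ℝ, 0 < r →
        (((L \ Y) ∩ Metric.ball (0 : EuclideanSpace ℝ (Fin d)) r).ncard : ℝ) < ε * r) ∧
      (∃ R > (0 : ℝ), ∀ x : EuclideanSpace ℝ (Fin d), ∃ y ∈ Y, dist x y < R) ∧
      (∀ y₁ ∈ L \ Y, ∀ y₂ ∈ L \ Y, y₁ ≠ y₂ → M ≤ dist y₁ y₂) := by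
  obtain ⟨m, rfl⟩ : ∃ m, d = m + 2 := ⟨d - 2, by omega⟩
  classical
  haveI hinf : Infinite (Fin (m+2) → ℤ) := Pi.infinite_of_exists_right (default : Fin (m+2))
  haveI hden : Denumerable (Fin (m+2) → ℤ) :=
    (nonempty_denumerable_iff.2 ⟨inferInstance, inferInstance⟩).some
  set e : ℕ ≃ (Fin (m+2) → ℤ) := (Denumerable.eqv (Fin (m+2) → ℤ)).symm with he
  set Mn : ℕ := ⌈M⌉₊ with hMndef
  set K : ℕ := Mn + ⌈8/ε⌉₊ + 2 with hKdef
  have hKM : Mn + 2 ≤ K := by omega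
  have hK1 : 1 ≤ K := by omega
  have hMMn : M ≤ (Mn : ℝ) := Nat.le_ceil M
  have hMn1 : (1:ℝ) < (Mn:ℝ) := lt_of_lt_of_le hM hMMn
  have hK8 : (8:ℝ) ≤ ε * K := by
    have h1 : 8/ε ≤ (⌈8/ε⌉₊ : ℝ) := Nat.le_ceil _
    have h2 : ((⌈8/ε⌉₊ : ℕ) : ℝ) ≤ (K:ℝ) := by exact_mod_cast (by omega : ⌈8/ε⌉₊ ≤ K)
    have h3 : 8/ε ≤ (K:ℝ) := le_trans h1 h2
    calc (8:ℝ) = ε * (8/ε) := by field_simp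
      _ ≤ ε * K := mul_le_mul_of_nonneg_left h3 (le_of_lt hε)
  have hYtL : Ytil m e K ⊆ L := by
    rw [hL]
    rintro p ⟨u, j, hj, rfl⟩
    simp only [Set.mem_setOf_eq]
    intro i
    exact ⟨(u + j • wv m (A m e K u)) i, rfl⟩
  have hLYt : L \ (L \ Ytil m e K) = Ytil m e K := Set.diff_diff_cancel_left hYtL
  have htoEL : ∀ w : Fin (m+2) → ℤ, toE m w ∈ L := by
    intro w
    rw [hL]
    simp only [Set.mem_setOf_eq]
    intro i
    exact ⟨w i, rfl⟩
  have hYpt : ∀ x : EuclideanSpace ℝ (Fin (m+2)), ∃ y, y ∈ (L \ Ytil m e K) \ {x} := by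
    intro x
    obtain ⟨w1, hw1, hd1⟩ := near_Y hKM hMn1 (0 : Fin (m+2) → ℤ)
    obtain ⟨w2, hw2, hd2⟩ := near_Y hKM hMn1 (stv m 3)
    have hne : toE m w1 ≠ toE m w2 := by
      intro h
      have h30 : dist (toE m (0 : Fin (m+2) → ℤ)) (toE m (stv m 3)) = 3 := by
        have : (stv m 3) = (0 : Fin (m+2) → ℤ) + stv m 3 := by rw [zero_add]
        rw [this, dist_toE_st]
        norm_num
      have htr : dist (toE m (0 : Fin (m+2) → ℤ)) (toE m (stv m 3))
          ≤ dist (toE m (0 : Fin (m+2) → ℤ)) (toE m w1)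
            + dist (toE m w2) (toE m (stv m 3)) := by
        rw [h]
        exact dist_triangle _ _ _
      rw [dist_comm (toE m w2)] at htr
      linarith
    rcases eq_or_ne (toE m w1) x with h | h
    · exact ⟨toE m w2, ⟨⟨htoEL w2, hw2⟩, by simp [← h, Ne.symm hne]⟩⟩
    · exact ⟨toE m w1, ⟨⟨htoEL w1, hw1⟩, by simp [h]⟩⟩
  refine ⟨L \ Ytil m e K, Set.diff_subset, ?_, ?_, ?_, ?_⟩
  · -- visibility
    intro x
    by_cases hx : x ∈ L
    · -- x is a lattice point
      rw [hL] at hx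
      simp only [Set.mem_setOf_eq] at hx
      choose u hu using hx
      have hxu : x = toE m u := by ext i; exact hu i
      set w := toE m (wv m (A m e K u)) with hw
      have hwne : w ≠ 0 := by
        intro h0
        have h1 : w 0 = (0 : EuclideanSpace ℝ (Fin (m+2))) 0 := by rw [h0]
        rw [hw, toE_apply, wv_zero] at h1
        have h2 : ((A m e K u : ℤ) : ℝ) = 0 := h1
        have h3 : 1 ≤ A m e K u := le_trans hK1 (K_le_A (e := e) (K := K) u)
        have h4 : A m e K u = 0 := by exact_mod_cast h2
        omega
      have hwn : ‖w‖ ≠ 0 := norm_ne_zero_iff.2 hwne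
      refine ⟨‖w‖⁻¹ • w, ?_, ?_⟩
      · rw [mem_sphere_zero_iff_norm, norm_smul, norm_inv, norm_norm]
        field_simp
      · obtain ⟨y0, hy0⟩ := hYpt x
        have hnem : (Set.image2 dist (ray x (‖w‖⁻¹ • w)) ((L \ Ytil m e K) \ {x})).Nonempty :=
          ⟨dist x y0, Set.mem_image2_of_mem ⟨0, le_refl 0, by simp⟩ hy0⟩
        have hbd : ∀ b ∈ Set.image2 dist (ray x (‖w‖⁻¹ • w)) ((L \ Ytil m e K) \ {x}),
            1/((A m e K u : ℝ)+1) ≤ b := by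
          rintro b ⟨p, hp, y, hy, rfl⟩
          have hyL : y ∈ L := hy.1.1
          rw [hL] at hyL
          simp only [Set.mem_setOf_eq] at hyL
          choose z hz using hyL
          have hyz : y = toE m z := by ext i; exact hz i
          refine vis_lattice u z hyz hy.1.2 (by rw [← hxu]; exact hy.2) ?_
          rw [← hw, ← hxu]
          exact hp
        have hpos : (0:ℝ) < 1/((A m e K u : ℝ)+1) := by positivity
        unfold setDist
        exact lt_of_lt_of_le hpos (le_csInf hnem hbd)
    · -- x is not a lattice point
      rw [hL] at hx
      simp only [Set.mem_setOf_eq] at hx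
      push_neg at hx
      obtain ⟨i0, hi0⟩ := hx
      set jj : Fin (m+2) := if i0 = 0 then 1 else 0 with hjj
      have hji : jj ≠ i0 := by
        by_cases h : i0 = 0
        · rw [hjj, if_pos h, h]
          exact Ne.symm (fin01 (m := m))
        · rw [hjj, if_neg h]
          exact fun hh => h hh.symm
      refine ⟨EuclideanSpace.single jj 1, ?_, ?_⟩
      · rw [mem_sphere_zero_iff_norm, EuclideanSpace.norm_single]
        norm_num
      · obtain ⟨y0, hy0⟩ := hYpt x
        have hδpos : 0 < |x i0 - (round (x i0) : ℝ)| :=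
          abs_pos.2 (sub_ne_zero.2 (hi0 (round (x i0))))
        have hnem : (Set.image2 dist (ray x (EuclideanSpace.single jj 1))
            ((L \ Ytil m e K) \ {x})).Nonempty :=
          ⟨dist x y0, Set.mem_image2_of_mem ⟨0, le_refl 0, by simp⟩ hy0⟩
        have hbd : ∀ b ∈ Set.image2 dist (ray x (EuclideanSpace.single jj 1))
            ((L \ Ytil m e K) \ {x}), |x i0 - (round (x i0) : ℝ)| ≤ b := by
          rintro b ⟨p, ⟨t, ht, rfl⟩, y, hy, rfl⟩
          have hyL : y ∈ L := hy.1.1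
          rw [hL] at hyL
          simp only [Set.mem_setOf_eq] at hyL
          obtain ⟨zz, hzz⟩ := hyL i0
          have hpi : (x + t • EuclideanSpace.single jj 1 :
              EuclideanSpace ℝ (Fin (m+2))) i0 = x i0 := by
            rw [PiLp.add_apply, PiLp.smul_apply, EuclideanSpace.single_apply,
              if_neg (fun hh => hji hh.symm)]
            simp
          refine le_trans ?_ (coord_le_dist _ _ i0)
          rw [hpi, hzz]
          exact round_best (x i0) zz
        unfold setDist
        exact lt_of_lt_of_le hδpos (le_csInf hnem hbd)
  · -- counting
    intro r hr
    rw [hLYt]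
    exact Ytil_count hε hK8 hK1 hr
  · -- relative density
    refine ⟨Real.sqrt (m+2) + 2, by positivity, ?_⟩
    intro x
    obtain ⟨w1, hw1, hd1⟩ := near_Y hKM hMn1 (fun i => round (x i))
    refine ⟨toE m w1, ⟨htoEL w1, hw1⟩, ?_⟩
    calc dist x (toE m w1)
        ≤ dist x (toE m (fun i => round (x i))) + dist (toE m (fun i => round (x i))) (toE m w1) :=
          dist_triangle _ _ _
      _ ≤ Real.sqrt (m+2) + 1 := add_le_add (dist_round_toE x) hd1
      _ < Real.sqrt (m+2) + 2 := by linarith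
  · -- separation
    intro y₁ hy₁ y₂ hy₂ hne
    rw [hLYt] at hy₁ hy₂
    calc M ≤ (Mn:ℝ) := hMMn
      _ ≤ dist y₁ y₂ := Ytil_sep hKM hy₁ hy₂ hne
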